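/- Let n ≥ 3, λ_i ≥ λ_j > 0, g ≥ 0, and ε_{ij} = (λ_i/λ_j + λ_j/λ_i + λ_i λ_j g)^{(2-n)/2}. If λ_i/λ_j ≥ 2 then −λ_i ∂_{λ_i} ε_{ij} = ((n-2)/2) ε_{ij}^{n/(n-2)} (λ_i/λ_j − λ_j/λ_i + λ_i λ_j g) ≥ ((n-2)/4) ε_{ij}. -/
import Mathlib


/-- Lower bound for the λ-derivative of the bubble interaction when the scales are ordered:
for `λ_i ≥ λ_j > 0`, `g ≥ 0` and `λ_i/λ_j ≥ 2`,
`−λ_i ∂_{λ_i} ε_{ij} = ((n-2)/2) ε_{ij}^{n/(n-2)} (λ_i/λ_j − λ_j/λ_i + λ_i λ_j g) ≥ ((n-2)/4) ε_{ij}`. -/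
theorem interaction_derivative_lower_bound (n : ℕ) (hn : 3 ≤ n) (li lj g : ℝ)
    (hj : 0 < lj) (hij : lj ≤ li) (hg : 0 ≤ g) (h2 : 2 ≤ li / lj) :
    ∀ D : ℝ,
      HasDerivAt (fun l : ℝ => (l / lj + lj / l + l * lj * g) ^ ((2 - (n : ℝ)) / 2)) D li →
      -(li * D) =
          (((n : ℝ) - 2) / 2) *
            (((li / lj + lj / li + li * lj * g) ^ ((2 - (n : ℝ)) / 2)) ^ ((n : ℝ) / ((n : ℝ) - 2))) *
            (li / lj - lj / li + li * lj * g) ∧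
        (((n : ℝ) - 2) / 4) * ((li / lj + lj / li + li * lj * g) ^ ((2 - (n : ℝ)) / 2)) ≤
          -(li * D) := by
  intro D hD
  have hli : 0 < li := lt_of_lt_of_le hj hij
  have hnR : (3 : ℝ) ≤ (n : ℝ) := by exact_mod_cast hn
  set B : ℝ := li / lj + lj / li + li * lj * g with hBdef
  have hBpos : 0 < B := by
    have : 0 < li / lj := div_pos hli hj
    have : 0 < lj / li := div_pos hj hli
    have : 0 ≤ li * lj * g := mul_nonneg (mul_nonneg hli.le hj.le) hg
    positivity
  -- derivative of the inner function
  have h1 : HasDerivAt (fun l : ℝ => l / lj + lj / l + l * lj * g)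
      (1 / lj + -(lj / li ^ 2) + lj * g) li := by
    have ha : HasDerivAt (fun l : ℝ => l / lj) (1 / lj) li :=
      (hasDerivAt_id li).div_const lj
    have hb : HasDerivAt (fun l : ℝ => lj / l) (-(lj / li ^ 2)) li := by
      have := (hasDerivAt_inv (ne_of_gt hli)).const_mul lj
      simpa [div_eq_mul_inv, mul_comm, mul_div_assoc] using this
    have hc : HasDerivAt (fun l : ℝ => l * lj * g) (lj * g) li := by
      have := ((hasDerivAt_id li).mul_const lj).mul_const g
      simpa using this
    exact (ha.add hb).add hc
  have hderiv : HasDerivAt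
      (fun l : ℝ => (l / lj + lj / l + l * lj * g) ^ ((2 - (n : ℝ)) / 2))
      ((1 / lj + -(lj / li ^ 2) + lj * g) * ((2 - (n : ℝ)) / 2) *
        B ^ ((2 - (n : ℝ)) / 2 - 1)) li := by
    have := h1.rpow_const (p := (2 - (n : ℝ)) / 2) (Or.inl (ne_of_gt hBpos))
    simpa [hBdef] using this
  have hDe : D = (1 / lj + -(lj / li ^ 2) + lj * g) * ((2 - (n : ℝ)) / 2) *
      B ^ ((2 - (n : ℝ)) / 2 - 1) := hD.unique hderiv
  have hn2 : (n : ℝ) - 2 ≠ 0 := by linarith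
  have e1 : (2 - (n : ℝ)) / 2 - 1 = -((n : ℝ) / 2) := by ring
  have e2 : (B ^ ((2 - (n : ℝ)) / 2)) ^ ((n : ℝ) / ((n : ℝ) - 2)) = B ^ (-((n : ℝ) / 2)) := by
    rw [← Real.rpow_mul hBpos.le]
    congr 1
    field_simp
    ring
  have e3 : B ^ ((2 - (n : ℝ)) / 2) = B ^ (-((n : ℝ) / 2)) * B := by
    rw [show (2 - (n : ℝ)) / 2 = -((n : ℝ) / 2) + 1 by ring,
      Real.rpow_add_one (ne_of_gt hBpos)]
  have key : -(li * D) = (((n : ℝ) - 2) / 2) * B ^ (-((n : ℝ) / 2)) *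
      (li / lj - lj / li + li * lj * g) := by
    rw [hDe, e1]
    field_simp
    ring
  constructor
  · rw [e2, key]
  · rw [key, e3]
    set A : ℝ := li / lj - lj / li + li * lj * g with hAdef
    have hP : 0 < B ^ (-((n : ℝ) / 2)) := Real.rpow_pos_of_pos hBpos _
    have hinv : lj / li ≤ 1 / 2 := by
      rw [div_le_div_iff₀ hli (by norm_num : (0:ℝ) < 2)]
      have : 2 * lj ≤ li := by
        rw [le_div_iff₀ hj] at h2
        linarith
      linarith
    have hBA : B ≤ 2 * A := by
      have hgg : 0 ≤ li * lj * g := mul_nonneg (mul_nonneg hli.le hj.le) hg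
      have : (3 : ℝ) * (lj / li) ≤ li / lj + li * lj * g := by
        nlinarith
      rw [hBdef, hAdef]
      linarith
    nlinarith [mul_nonneg (mul_nonneg (by linarith : (0:ℝ) ≤ (n : ℝ) - 2) hP.le)
      (by linarith : (0:ℝ) ≤ 2 * A - B)]
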